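/- Let (p, l) be an affine-normalized realization of an incidence structure S = (P, L, I) with pin set Q ⊆ P, and suppose this pinned realization is second-order rigid. Then every pinned analytic motion (p_t, l_t) of (p, l) is constant: p_t = p and l_t = l for all t ∈ ℝ. That is, every second-order rigid projective configuration is rigid. -/

import Mathlib

open Matrix

private lemma iterDeriv_const' (c : ℝ) : ∀ n : ℕ,
    iteratedDeriv (n + 1) (fun _ : ℝ => c) = fun _ => 0 := by
  intro n
  induction n generalizing c with
  | zero =>
    rw [iteratedDeriv_succ, iteratedDeriv_zero]
    exact deriv_const' c
  | succ n ih =>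
    rw [iteratedDeriv_succ', deriv_const']
    exact ih 0

private lemma iterDeriv_const (c : ℝ) {n : ℕ} (hn : n ≠ 0) :
    iteratedDeriv n (fun _ : ℝ => c) = fun _ => 0 := by
  obtain ⟨m, rfl⟩ := Nat.exists_eq_succ_of_ne_zero hn
  exact iterDeriv_const' c m

private lemma diff_of_analytic (φ : ℝ → ℝ) (h : ∀ t, AnalyticAt ℝ φ t) :
    ∀ m, Differentiable ℝ (iteratedDeriv m φ) := by
  have hA : AnalyticOnNhd ℝ φ Set.univ := fun x _ => h x
  have hc : ContDiff ℝ (⊤ : WithTop ℕ∞) φ := hA.contDiff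
  intro m
  exact hc.differentiable_iteratedDeriv m (by simp)

private lemma iterDeriv_add (f g : ℝ → ℝ)
    (hf : ∀ m, Differentiable ℝ (iteratedDeriv m f))
    (hg : ∀ m, Differentiable ℝ (iteratedDeriv m g)) :
    ∀ (n : ℕ) (x : ℝ), iteratedDeriv n (fun s => f s + g s) x
      = iteratedDeriv n f x + iteratedDeriv n g x := by
  intro n
  induction n with
  | zero => intro x; simp [iteratedDeriv_zero]
  | succ n ih =>
    intro x
    rw [iteratedDeriv_succ]
    have hrw : iteratedDeriv n (fun s => f s + g s)
        = fun x => iteratedDeriv n f x + iteratedDeriv n g x := funext ih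
    rw [hrw, iteratedDeriv_succ, iteratedDeriv_succ]
    exact deriv_add (hf n x) (hg n x)

private lemma iterDeriv_mul (f g : ℝ → ℝ)
    (hf : ∀ m, Differentiable ℝ (iteratedDeriv m f))
    (hg : ∀ m, Differentiable ℝ (iteratedDeriv m g)) :
    ∀ (n : ℕ) (x : ℝ), iteratedDeriv n (fun s => f s * g s) x
      = ∑ q ∈ Finset.HasAntidiagonal.antidiagonal n,
          (n.choose q.1 : ℝ) * (iteratedDeriv q.1 f x * iteratedDeriv q.2 g x) := by
  intro n
  induction n with
  | zero => intro x; simp [iteratedDeriv_zero]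
  | succ n ih =>
    intro x
    rw [iteratedDeriv_succ]
    have hrw : iteratedDeriv n (fun s => f s * g s)
        = fun x => ∑ q ∈ Finset.HasAntidiagonal.antidiagonal n,
            (n.choose q.1 : ℝ) * (iteratedDeriv q.1 f x * iteratedDeriv q.2 g x) := funext ih
    rw [hrw]
    rw [deriv_fun_sum (fun q _ => (((hf q.1 x).mul (hg q.2 x)).const_mul _))]
    have hterm : ∀ q ∈ Finset.HasAntidiagonal.antidiagonal n,
        deriv (fun y => (n.choose q.1 : ℝ) *
            (iteratedDeriv q.1 f y * iteratedDeriv q.2 g y)) x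
          = (n.choose q.1 : ℝ) * (iteratedDeriv (q.1 + 1) f x * iteratedDeriv q.2 g x)
            + (n.choose q.1 : ℝ) * (iteratedDeriv q.1 f x * iteratedDeriv (q.2 + 1) g x) := by
      intro q _
      rw [deriv_const_mul (d := fun y => iteratedDeriv q.1 f y * iteratedDeriv q.2 g y) _ ((hf q.1 x).mul (hg q.2 x)),
        deriv_fun_mul (hf q.1 x) (hg q.2 x), ← iteratedDeriv_succ, ← iteratedDeriv_succ]
      ring
    rw [Finset.sum_congr rfl hterm, Finset.sum_add_distrib]
    have hswap : ∑ q ∈ Finset.HasAntidiagonal.antidiagonal n,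
        (n.choose q.1 : ℝ) * (iteratedDeriv q.1 f x * iteratedDeriv (q.2 + 1) g x)
      = iteratedDeriv 0 f x * iteratedDeriv (n + 1) g x
        + ∑ q ∈ Finset.HasAntidiagonal.antidiagonal n,
            (n.choose (q.1 + 1) : ℝ) * (iteratedDeriv (q.1 + 1) f x * iteratedDeriv q.2 g x) := by
      have h1 := Finset.Nat.sum_antidiagonal_succ (n := n)
        (f := fun q : ℕ × ℕ => (n.choose q.1 : ℝ) *
          (iteratedDeriv q.1 f x * iteratedDeriv q.2 g x))
      have h2 := Finset.Nat.sum_antidiagonal_succ' (n := n)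
        (f := fun q : ℕ × ℕ => (n.choose q.1 : ℝ) *
          (iteratedDeriv q.1 f x * iteratedDeriv q.2 g x))
      have h3 := h2.symm.trans h1
      simp only [Nat.choose_succ_self, Nat.cast_zero, zero_mul, zero_add,
        Nat.choose_zero_right, Nat.cast_one, one_mul] at h3
      exact h3
    rw [hswap, Finset.Nat.sum_antidiagonal_succ]
    simp only [Nat.choose_succ_succ, Nat.cast_add, add_mul, Nat.choose_zero_right,
      Nat.cast_one, one_mul, Finset.sum_add_distrib]
    ring

private lemma const_of_iterDeriv_zero (φ : ℝ → ℝ) (hφ : ∀ t, AnalyticAt ℝ φ t)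
    (h : ∀ n : ℕ, n ≠ 0 → iteratedDeriv n φ 0 = 0) : ∀ t, φ t = φ 0 := by
  obtain ⟨q, r, hr⟩ := hφ 0
  have hev : φ =ᶠ[nhds (0 : ℝ)] fun _ => φ 0 := by
    filter_upwards [EMetric.ball_mem_nhds (0 : ℝ) hr.r_pos] with y hy
    have hs := hr.hasSum_iteratedFDeriv hy
    have h2 : (fun n => (n.factorial : ℝ)⁻¹ • iteratedFDeriv ℝ n φ 0 fun _ => y)
        = fun n => if n = 0 then φ 0 else 0 := by
      funext n
      rw [iteratedFDeriv_apply_eq_iteratedDeriv_mul_prod]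
      rcases eq_or_ne n 0 with hn | hn
      · subst hn; simp [iteratedDeriv_zero]
      · simp [h n hn, hn]
    rw [h2] at hs
    have := hs.unique (hasSum_ite_eq 0 (φ 0))
    simpa using this
  have hA : AnalyticOnNhd ℝ φ Set.univ := fun x _ => hφ x
  have hB : AnalyticOnNhd ℝ (fun _ : ℝ => φ 0) Set.univ := fun x _ => analyticAt_const
  have := hA.eq_of_eventuallyEq hB hev
  intro t
  exact congrFun this t

/-- a second-order rigid pinned affine-normalized realization is
rigid: every pinned real-analytic motion is constant. -/
theorem secondOrderRigid_implies_rigid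
    {P L : Type*} [Fintype P] [Fintype L] (I : Set (P × L))
    (p : P → Fin 2 → ℝ) (l : L → Fin 2 → ℝ)
    (hreal : ∀ ij ∈ I, p ij.1 ⬝ᵥ l ij.2 = -1)
    (Q : Set P)
    (hsor : ∀ (p' p'' : P → Fin 2 → ℝ) (l' l'' : L → Fin 2 → ℝ),
      (∀ ij ∈ I, p ij.1 ⬝ᵥ l' ij.2 + p' ij.1 ⬝ᵥ l ij.2 = 0) →
      (∀ ij ∈ I, p ij.1 ⬝ᵥ l'' ij.2 + 2 * (p' ij.1 ⬝ᵥ l' ij.2) +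
        p'' ij.1 ⬝ᵥ l ij.2 = 0) →
      (∀ i ∈ Q, p' i = 0) → (∀ i ∈ Q, p'' i = 0) →
      p' = 0 ∧ l' = 0)
    (pt : ℝ → P → Fin 2 → ℝ) (lt : ℝ → L → Fin 2 → ℝ)
    (han_p : ∀ i, ∀ t : ℝ, AnalyticAt ℝ (fun s => pt s i) t)
    (han_l : ∀ j, ∀ t : ℝ, AnalyticAt ℝ (fun s => lt s j) t)
    (h0p : pt 0 = p) (h0l : lt 0 = l)
    (hmot : ∀ t, ∀ ij ∈ I, pt t ij.1 ⬝ᵥ lt t ij.2 = -1)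
    (hpin : ∀ t, ∀ i ∈ Q, pt t i = p i) :
    ∀ t : ℝ, pt t = p ∧ lt t = l := by
  classical
  -- coordinate analyticity
  have hpA : ∀ i (c : Fin 2) (t : ℝ), AnalyticAt ℝ (fun s => pt s i c) t := by
    intro i c t
    exact analyticAt_pi_iff.1 (han_p i t) c
  have hlA : ∀ j (c : Fin 2) (t : ℝ), AnalyticAt ℝ (fun s => lt s j c) t := by
    intro j c t
    exact analyticAt_pi_iff.1 (han_l j t) c
  have hpD : ∀ i (c : Fin 2), ∀ m, Differentiable ℝ (iteratedDeriv m (fun s => pt s i c)) :=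
    fun i c => diff_of_analytic _ (hpA i c)
  have hlD : ∀ j (c : Fin 2), ∀ m, Differentiable ℝ (iteratedDeriv m (fun s => lt s j c)) :=
    fun j c => diff_of_analytic _ (hlA j c)
  set A : ℕ → P → Fin 2 → ℝ := fun n i c => iteratedDeriv n (fun s => pt s i c) 0 with hAdef
  set B : ℕ → L → Fin 2 → ℝ := fun n j c => iteratedDeriv n (fun s => lt s j c) 0 with hBdef
  have hA0 : A 0 = p := by
    funext i c
    show iteratedDeriv 0 (fun s => pt s i c) 0 = p i c
    rw [iteratedDeriv_zero, h0p]
  have hB0 : B 0 = l := by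
    funext j c
    show iteratedDeriv 0 (fun s => lt s j c) 0 = l j c
    rw [iteratedDeriv_zero, h0l]
  -- Taylor coefficients of the incidence relations
  have hkey : ∀ ij ∈ I, ∀ n : ℕ, n ≠ 0 →
      ∑ q ∈ Finset.HasAntidiagonal.antidiagonal n, (n.choose q.1 : ℝ) * (A q.1 ij.1 ⬝ᵥ B q.2 ij.2) = 0 := by
    intro ij hij n hn
    have hsplit : (fun s => pt s ij.1 ⬝ᵥ lt s ij.2)
        = fun s => (pt s ij.1 0 * lt s ij.2 0) + (pt s ij.1 1 * lt s ij.2 1) := by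
      funext s
      simp [dotProduct, Fin.sum_univ_two]
    have hconst : (fun s => pt s ij.1 ⬝ᵥ lt s ij.2) = fun _ : ℝ => (-1 : ℝ) :=
      funext fun t => hmot t ij hij
    have e1 : iteratedDeriv n (fun s => pt s ij.1 ⬝ᵥ lt s ij.2) 0 = 0 := by
      rw [hconst, iterDeriv_const _ hn]
    have d0 : ∀ m, Differentiable ℝ (iteratedDeriv m (fun s => pt s ij.1 0 * lt s ij.2 0)) :=
      diff_of_analytic _ (fun t => (hpA ij.1 0 t).mul (hlA ij.2 0 t))
    have d1 : ∀ m, Differentiable ℝ (iteratedDeriv m (fun s => pt s ij.1 1 * lt s ij.2 1)) :=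
      diff_of_analytic _ (fun t => (hpA ij.1 1 t).mul (hlA ij.2 1 t))
    have e2 : iteratedDeriv n (fun s => pt s ij.1 ⬝ᵥ lt s ij.2) 0
        = ∑ q ∈ Finset.HasAntidiagonal.antidiagonal n, (n.choose q.1 : ℝ) * (A q.1 ij.1 ⬝ᵥ B q.2 ij.2) := by
      rw [hsplit]
      rw [iterDeriv_add _ _ d0 d1 n 0]
      rw [iterDeriv_mul _ _ (hpD ij.1 0) (hlD ij.2 0) n 0,
        iterDeriv_mul _ _ (hpD ij.1 1) (hlD ij.2 1) n 0, ← Finset.sum_add_distrib]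
      refine Finset.sum_congr rfl fun q _ => ?_
      simp only [hAdef, hBdef, dotProduct, Fin.sum_univ_two]
      ring
    rw [← e2, e1]
  -- pinned points have vanishing coefficients
  have hApin : ∀ i ∈ Q, ∀ n : ℕ, n ≠ 0 → A n i = 0 := by
    intro i hi n hn
    funext c
    have hc : (fun s => pt s i c) = fun _ : ℝ => p i c :=
      funext fun t => congrFun (hpin t i hi) c
    show iteratedDeriv n (fun s => pt s i c) 0 = 0
    rw [hc, iterDeriv_const _ hn]
  -- main induction: all positive-order coefficients vanish
  have main : ∀ k : ℕ, ∀ m : ℕ, m ≠ 0 → m ≤ k → A m = 0 ∧ B m = 0 := by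
    intro k
    induction k with
    | zero => intro m hm hk; omega
    | succ k ih =>
      intro m hm hmk
      rcases Nat.lt_or_ge m (k + 1) with hlt | hge
      · exact ih m hm (by omega)
      have hm' : m = k + 1 := by omega
      subst hm'
      -- first-order condition
      have hAz : ∀ m' : ℕ, m' ≠ 0 → m' ≤ k → ∀ x v, A m' x ⬝ᵥ v = 0 := by
        intro m' h1 h2 x v
        rw [congrFun (ih m' h1 h2).1 x]
        exact zero_dotProduct v
      have hBz : ∀ m' : ℕ, m' ≠ 0 → m' ≤ k → ∀ (y : L) (u : Fin 2 → ℝ), u ⬝ᵥ B m' y = 0 := by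
        intro m' h1 h2 y u
        rw [congrFun (ih m' h1 h2).2 y]
        exact dotProduct_zero u
      have first : ∀ ij ∈ I,
          p ij.1 ⬝ᵥ B (k + 1) ij.2 + A (k + 1) ij.1 ⬝ᵥ l ij.2 = 0 := by
        intro ij hij
        have hk1 := hkey ij hij (k + 1) (by omega)
        have hsub : ({((0 : ℕ), k + 1), (k + 1, (0 : ℕ))} : Finset (ℕ × ℕ))
            ⊆ Finset.HasAntidiagonal.antidiagonal (k + 1) := by
          intro q hq
          simp only [Finset.mem_insert, Finset.mem_singleton] at hq
          rcases hq with rfl | rfl <;> simp [Finset.mem_antidiagonal]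
        have hzero : ∀ q ∈ Finset.HasAntidiagonal.antidiagonal (k + 1),
            q ∉ ({((0 : ℕ), k + 1), (k + 1, (0 : ℕ))} : Finset (ℕ × ℕ)) →
            ((k + 1).choose q.1 : ℝ) * (A q.1 ij.1 ⬝ᵥ B q.2 ij.2) = 0 := by
          intro q hq hq'
          simp only [Finset.HasAntidiagonal.mem_antidiagonal] at hq
          simp only [Finset.mem_insert, Finset.mem_singleton] at hq'
          push_neg at hq'
          obtain ⟨h1, h2⟩ := hq'
          have hq1 : q.1 ≠ 0 := by
            intro h
            exact h1 (by rw [Prod.ext_iff]; constructor <;> omega)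
          have hq2 : q.1 ≤ k := by
            by_contra h
            exact h2 (by rw [Prod.ext_iff]; constructor <;> omega)
          rw [hAz q.1 hq1 hq2, mul_zero]
        have := (Finset.sum_subset hsub hzero).trans hk1
        rw [Finset.sum_pair (by simp : ((0 : ℕ), k + 1) ≠ (k + 1, (0 : ℕ)))] at this
        simp only [Nat.choose_zero_right, Nat.choose_self, Nat.cast_one, one_mul] at this
        rw [hA0, hB0] at this
        exact this
      set C : ℝ := ((2 * k + 2).choose (k + 1) : ℝ) with hCdef
      have hC : C ≠ 0 := by
        rw [hCdef]
        exact_mod_cast (Nat.choose_pos (by omega)).ne'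
      have second : ∀ ij ∈ I,
          p ij.1 ⬝ᵥ B (2 * k + 2) ij.2 + C * (A (k + 1) ij.1 ⬝ᵥ B (k + 1) ij.2)
            + A (2 * k + 2) ij.1 ⬝ᵥ l ij.2 = 0 := by
        intro ij hij
        have hk2 := hkey ij hij (2 * k + 2) (by omega)
        have hsub : ({((0 : ℕ), 2 * k + 2), (k + 1, k + 1), (2 * k + 2, (0 : ℕ))} :
            Finset (ℕ × ℕ)) ⊆ Finset.HasAntidiagonal.antidiagonal (2 * k + 2) := by
          intro q hq
          simp only [Finset.mem_insert, Finset.mem_singleton] at hq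
          rcases hq with rfl | rfl | rfl <;> simp [Finset.mem_antidiagonal] <;> omega
        have hzero : ∀ q ∈ Finset.HasAntidiagonal.antidiagonal (2 * k + 2),
            q ∉ ({((0 : ℕ), 2 * k + 2), (k + 1, k + 1), (2 * k + 2, (0 : ℕ))} :
              Finset (ℕ × ℕ)) →
            ((2 * k + 2).choose q.1 : ℝ) * (A q.1 ij.1 ⬝ᵥ B q.2 ij.2) = 0 := by
          intro q hq hq'
          simp only [Finset.HasAntidiagonal.mem_antidiagonal] at hq
          simp only [Finset.mem_insert, Finset.mem_singleton] at hq'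
          push_neg at hq'
          obtain ⟨h1, h2, h3⟩ := hq'
          rcases Nat.lt_or_ge q.1 (k + 1) with hc1 | hc1
          · have hq1 : q.1 ≠ 0 := by
              intro h
              exact h1 (by rw [Prod.ext_iff]; constructor <;> omega)
            rw [hAz q.1 hq1 (by omega), mul_zero]
          · have hq2 : q.2 ≠ 0 := by
              intro h
              exact h3 (by rw [Prod.ext_iff]; constructor <;> omega)
            have hq2' : q.2 ≤ k := by
              by_contra h
              exact h2 (by rw [Prod.ext_iff]; constructor <;> omega)
            rw [hBz q.2 hq2 hq2', mul_zero]
        have heq := (Finset.sum_subset hsub hzero).trans hk2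
        rw [Finset.sum_insert (by simp [Prod.ext_iff] <;> omega), Finset.sum_pair
          (by simp [Prod.ext_iff] <;> omega : ((k + 1 : ℕ), (k + 1 : ℕ)) ≠ (2 * k + 2, (0 : ℕ)))] at heq
        simp only [Nat.choose_zero_right, Nat.cast_one, one_mul] at heq
        rw [hA0, hB0] at heq
        have hcs : ((2 * k + 2).choose (2 * k + 2) : ℝ) = 1 := by
          rw [Nat.choose_self]; norm_num
        rw [hcs, one_mul] at heq
        rw [← hCdef] at heq
        linarith [heq]
      have hC2 : (2 / C) * C = 2 := div_mul_cancel₀ 2 hC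
      obtain ⟨h1, h2⟩ := hsor (A (k + 1)) ((2 / C) • A (2 * k + 2))
        (B (k + 1)) ((2 / C) • B (2 * k + 2))
        first
        (by
          intro ij hij
          simp only [Pi.smul_apply, dotProduct_smul, smul_dotProduct,
            smul_eq_mul]
          linear_combination (2 / C) * second ij hij
            - (A (k + 1) ij.1 ⬝ᵥ B (k + 1) ij.2) * hC2)
        (fun i hi => hApin i hi (k + 1) (by omega))
        (by
          intro i hi
          have := hApin i hi (2 * k + 2) (by omega)
          funext c
          simp [this])
      rcases Nat.lt_or_ge (k + 1) (k + 1) with h | _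
      · omega
      exact ⟨h1, h2⟩
  have hAall : ∀ n : ℕ, n ≠ 0 → A n = 0 := fun n hn => (main n n hn le_rfl).1
  have hBall : ∀ n : ℕ, n ≠ 0 → B n = 0 := fun n hn => (main n n hn le_rfl).2
  intro t
  constructor
  · funext i c
    have hcst := const_of_iterDeriv_zero (fun s => pt s i c) (hpA i c) (by
      intro n hn
      have := congrFun (congrFun (hAall n hn) i) c
      simpa [hAdef] using this)
    have : pt t i c = pt 0 i c := hcst t
    rw [this, h0p]
  · funext j c
    have hcst := const_of_iterDeriv_zero (fun s => lt s j c) (hlA j c) (by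
      intro n hn
      have := congrFun (congrFun (hBall n hn) j) c
      simpa [hBdef] using this)
    have : lt t j c = lt 0 j c := hcst t
    rw [this, h0l]
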